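/- Let M be the double star block matrix with xᵀy = 0 = zᵀw, a, b ≠ 0, and suppose s, u, t, v (the Gram scalars of x, y, z, w), r = aā + w*w and h = bb̄ + y*y are all nonzero. Then the GDC inverse M† M^⊕ M equals [[0, ā(br)⁻¹xᵀ, b⁻¹, 0],[0, 0, 0, 0],[a⁻¹, 0, 0, b̄(ah)⁻¹zᵀ],[0, 0, 0, 0]]. -/

import Mathlib

set_option maxHeartbeats 2000000



open Matrix BigOperators

noncomputable section

abbrev Idx (m n : ℕ) := (Unit ⊕ Fin m) ⊕ (Unit ⊕ Fin n)

/-- 4×4 block builder for matrices indexed by a double star digraph vertex set: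
the blocks correspond to the first center, the first star's leaves, the second
center and the second star's leaves, in this order. -/
def blk {m n : ℕ}
    (A11 : ℂ) (A12 : Fin m → ℂ) (A13 : ℂ) (A14 : Fin n → ℂ)
    (A21 : Fin m → ℂ) (A22 : Fin m → Fin m → ℂ) (A23 : Fin m → ℂ) (A24 : Fin m → Fin n → ℂ)
    (A31 : ℂ) (A32 : Fin m → ℂ) (A33 : ℂ) (A34 : Fin n → ℂ)
    (A41 : Fin n → ℂ) (A42 : Fin n → Fin m → ℂ) (A43 : Fin n → ℂ) (A44 : Fin n → Fin n → ℂ) :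
    Matrix (Idx m n) (Idx m n) ℂ :=
  Matrix.of fun i j =>
    match i, j with
    | .inl (.inl _), .inl (.inl _) => A11
    | .inl (.inl _), .inl (.inr k) => A12 k
    | .inl (.inl _), .inr (.inl _) => A13
    | .inl (.inl _), .inr (.inr k) => A14 k
    | .inl (.inr i'), .inl (.inl _) => A21 i'
    | .inl (.inr i'), .inl (.inr k) => A22 i' k
    | .inl (.inr i'), .inr (.inl _) => A23 i'
    | .inl (.inr i'), .inr (.inr k) => A24 i' k
    | .inr (.inl _), .inl (.inl _) => A31
    | .inr (.inl _), .inl (.inr k) => A32 k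
    | .inr (.inl _), .inr (.inl _) => A33
    | .inr (.inl _), .inr (.inr k) => A34 k
    | .inr (.inr i'), .inl (.inl _) => A41 i'
    | .inr (.inr i'), .inl (.inr k) => A42 i' k
    | .inr (.inr i'), .inr (.inl _) => A43 i'
    | .inr (.inr i'), .inr (.inr k) => A44 i' k

/-- The canonical matrix `[[0, xᵀ, a, 0],[y, 0, 0, 0],[b, 0, 0, zᵀ],[0, 0, w, 0]]`
associated with a double star digraph. -/
def dsM {m n : ℕ} (a b : ℂ) (x y : Fin m → ℂ) (z w : Fin n → ℂ) :
    Matrix (Idx m n) (Idx m n) ℂ :=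
  blk 0 x a (fun _ => 0)
      y (fun _ _ => 0) (fun _ => 0) (fun _ _ => 0)
      b (fun _ => 0) 0 z
      (fun _ => 0) (fun _ _ => 0) w (fun _ _ => 0)

/-- `xᵀy`. -/
def dotT {k : ℕ} (x y : Fin k → ℂ) : ℂ := ∑ i, x i * y i

/-- `x*x = ∑ conj xᵢ · xᵢ`. -/
def gram {k : ℕ} (x : Fin k → ℂ) : ℂ := ∑ i, star (x i) * x i


@[simp] lemma blk_apply_11 {m n : ℕ}
    (A11 : ℂ) (A12 : Fin m → ℂ) (A13 : ℂ) (A14 : Fin n → ℂ)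
    (A21 : Fin m → ℂ) (A22 : Fin m → Fin m → ℂ) (A23 : Fin m → ℂ) (A24 : Fin m → Fin n → ℂ)
    (A31 : ℂ) (A32 : Fin m → ℂ) (A33 : ℂ) (A34 : Fin n → ℂ)
    (A41 : Fin n → ℂ) (A42 : Fin n → Fin m → ℂ) (A43 : Fin n → ℂ) (A44 : Fin n → Fin n → ℂ) (u : Unit) (v : Unit) :
    blk A11 A12 A13 A14 A21 A22 A23 A24 A31 A32 A33 A34 A41 A42 A43 A44 (.inl (.inl u)) (.inl (.inl v)) = A11 := rfl

@[simp] lemma blk_apply_12 {m n : ℕ}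
    (A11 : ℂ) (A12 : Fin m → ℂ) (A13 : ℂ) (A14 : Fin n → ℂ)
    (A21 : Fin m → ℂ) (A22 : Fin m → Fin m → ℂ) (A23 : Fin m → ℂ) (A24 : Fin m → Fin n → ℂ)
    (A31 : ℂ) (A32 : Fin m → ℂ) (A33 : ℂ) (A34 : Fin n → ℂ)
    (A41 : Fin n → ℂ) (A42 : Fin n → Fin m → ℂ) (A43 : Fin n → ℂ) (A44 : Fin n → Fin n → ℂ) (u : Unit) (k : Fin m) :
    blk A11 A12 A13 A14 A21 A22 A23 A24 A31 A32 A33 A34 A41 A42 A43 A44 (.inl (.inl u)) (.inl (.inr k)) = A12 k := rfl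

@[simp] lemma blk_apply_13 {m n : ℕ}
    (A11 : ℂ) (A12 : Fin m → ℂ) (A13 : ℂ) (A14 : Fin n → ℂ)
    (A21 : Fin m → ℂ) (A22 : Fin m → Fin m → ℂ) (A23 : Fin m → ℂ) (A24 : Fin m → Fin n → ℂ)
    (A31 : ℂ) (A32 : Fin m → ℂ) (A33 : ℂ) (A34 : Fin n → ℂ)
    (A41 : Fin n → ℂ) (A42 : Fin n → Fin m → ℂ) (A43 : Fin n → ℂ) (A44 : Fin n → Fin n → ℂ) (u : Unit) (v : Unit) :
    blk A11 A12 A13 A14 A21 A22 A23 A24 A31 A32 A33 A34 A41 A42 A43 A44 (.inl (.inl u)) (.inr (.inl v)) = A13 := rfl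

@[simp] lemma blk_apply_14 {m n : ℕ}
    (A11 : ℂ) (A12 : Fin m → ℂ) (A13 : ℂ) (A14 : Fin n → ℂ)
    (A21 : Fin m → ℂ) (A22 : Fin m → Fin m → ℂ) (A23 : Fin m → ℂ) (A24 : Fin m → Fin n → ℂ)
    (A31 : ℂ) (A32 : Fin m → ℂ) (A33 : ℂ) (A34 : Fin n → ℂ)
    (A41 : Fin n → ℂ) (A42 : Fin n → Fin m → ℂ) (A43 : Fin n → ℂ) (A44 : Fin n → Fin n → ℂ) (u : Unit) (k : Fin n) :
    blk A11 A12 A13 A14 A21 A22 A23 A24 A31 A32 A33 A34 A41 A42 A43 A44 (.inl (.inl u)) (.inr (.inr k)) = A14 k := rfl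

@[simp] lemma blk_apply_21 {m n : ℕ}
    (A11 : ℂ) (A12 : Fin m → ℂ) (A13 : ℂ) (A14 : Fin n → ℂ)
    (A21 : Fin m → ℂ) (A22 : Fin m → Fin m → ℂ) (A23 : Fin m → ℂ) (A24 : Fin m → Fin n → ℂ)
    (A31 : ℂ) (A32 : Fin m → ℂ) (A33 : ℂ) (A34 : Fin n → ℂ)
    (A41 : Fin n → ℂ) (A42 : Fin n → Fin m → ℂ) (A43 : Fin n → ℂ) (A44 : Fin n → Fin n → ℂ) (i : Fin m) (v : Unit) :
    blk A11 A12 A13 A14 A21 A22 A23 A24 A31 A32 A33 A34 A41 A42 A43 A44 (.inl (.inr i)) (.inl (.inl v)) = A21 i := rfl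

@[simp] lemma blk_apply_22 {m n : ℕ}
    (A11 : ℂ) (A12 : Fin m → ℂ) (A13 : ℂ) (A14 : Fin n → ℂ)
    (A21 : Fin m → ℂ) (A22 : Fin m → Fin m → ℂ) (A23 : Fin m → ℂ) (A24 : Fin m → Fin n → ℂ)
    (A31 : ℂ) (A32 : Fin m → ℂ) (A33 : ℂ) (A34 : Fin n → ℂ)
    (A41 : Fin n → ℂ) (A42 : Fin n → Fin m → ℂ) (A43 : Fin n → ℂ) (A44 : Fin n → Fin n → ℂ) (i : Fin m) (k : Fin m) :
    blk A11 A12 A13 A14 A21 A22 A23 A24 A31 A32 A33 A34 A41 A42 A43 A44 (.inl (.inr i)) (.inl (.inr k)) = A22 i k := rfl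

@[simp] lemma blk_apply_23 {m n : ℕ}
    (A11 : ℂ) (A12 : Fin m → ℂ) (A13 : ℂ) (A14 : Fin n → ℂ)
    (A21 : Fin m → ℂ) (A22 : Fin m → Fin m → ℂ) (A23 : Fin m → ℂ) (A24 : Fin m → Fin n → ℂ)
    (A31 : ℂ) (A32 : Fin m → ℂ) (A33 : ℂ) (A34 : Fin n → ℂ)
    (A41 : Fin n → ℂ) (A42 : Fin n → Fin m → ℂ) (A43 : Fin n → ℂ) (A44 : Fin n → Fin n → ℂ) (i : Fin m) (v : Unit) :
    blk A11 A12 A13 A14 A21 A22 A23 A24 A31 A32 A33 A34 A41 A42 A43 A44 (.inl (.inr i)) (.inr (.inl v)) = A23 i := rfl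

@[simp] lemma blk_apply_24 {m n : ℕ}
    (A11 : ℂ) (A12 : Fin m → ℂ) (A13 : ℂ) (A14 : Fin n → ℂ)
    (A21 : Fin m → ℂ) (A22 : Fin m → Fin m → ℂ) (A23 : Fin m → ℂ) (A24 : Fin m → Fin n → ℂ)
    (A31 : ℂ) (A32 : Fin m → ℂ) (A33 : ℂ) (A34 : Fin n → ℂ)
    (A41 : Fin n → ℂ) (A42 : Fin n → Fin m → ℂ) (A43 : Fin n → ℂ) (A44 : Fin n → Fin n → ℂ) (i : Fin m) (k : Fin n) :
    blk A11 A12 A13 A14 A21 A22 A23 A24 A31 A32 A33 A34 A41 A42 A43 A44 (.inl (.inr i)) (.inr (.inr k)) = A24 i k := rfl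

@[simp] lemma blk_apply_31 {m n : ℕ}
    (A11 : ℂ) (A12 : Fin m → ℂ) (A13 : ℂ) (A14 : Fin n → ℂ)
    (A21 : Fin m → ℂ) (A22 : Fin m → Fin m → ℂ) (A23 : Fin m → ℂ) (A24 : Fin m → Fin n → ℂ)
    (A31 : ℂ) (A32 : Fin m → ℂ) (A33 : ℂ) (A34 : Fin n → ℂ)
    (A41 : Fin n → ℂ) (A42 : Fin n → Fin m → ℂ) (A43 : Fin n → ℂ) (A44 : Fin n → Fin n → ℂ) (u : Unit) (v : Unit) :
    blk A11 A12 A13 A14 A21 A22 A23 A24 A31 A32 A33 A34 A41 A42 A43 A44 (.inr (.inl u)) (.inl (.inl v)) = A31 := rfl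

@[simp] lemma blk_apply_32 {m n : ℕ}
    (A11 : ℂ) (A12 : Fin m → ℂ) (A13 : ℂ) (A14 : Fin n → ℂ)
    (A21 : Fin m → ℂ) (A22 : Fin m → Fin m → ℂ) (A23 : Fin m → ℂ) (A24 : Fin m → Fin n → ℂ)
    (A31 : ℂ) (A32 : Fin m → ℂ) (A33 : ℂ) (A34 : Fin n → ℂ)
    (A41 : Fin n → ℂ) (A42 : Fin n → Fin m → ℂ) (A43 : Fin n → ℂ) (A44 : Fin n → Fin n → ℂ) (u : Unit) (k : Fin m) :
    blk A11 A12 A13 A14 A21 A22 A23 A24 A31 A32 A33 A34 A41 A42 A43 A44 (.inr (.inl u)) (.inl (.inr k)) = A32 k := rfl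

@[simp] lemma blk_apply_33 {m n : ℕ}
    (A11 : ℂ) (A12 : Fin m → ℂ) (A13 : ℂ) (A14 : Fin n → ℂ)
    (A21 : Fin m → ℂ) (A22 : Fin m → Fin m → ℂ) (A23 : Fin m → ℂ) (A24 : Fin m → Fin n → ℂ)
    (A31 : ℂ) (A32 : Fin m → ℂ) (A33 : ℂ) (A34 : Fin n → ℂ)
    (A41 : Fin n → ℂ) (A42 : Fin n → Fin m → ℂ) (A43 : Fin n → ℂ) (A44 : Fin n → Fin n → ℂ) (u : Unit) (v : Unit) :
    blk A11 A12 A13 A14 A21 A22 A23 A24 A31 A32 A33 A34 A41 A42 A43 A44 (.inr (.inl u)) (.inr (.inl v)) = A33 := rfl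

@[simp] lemma blk_apply_34 {m n : ℕ}
    (A11 : ℂ) (A12 : Fin m → ℂ) (A13 : ℂ) (A14 : Fin n → ℂ)
    (A21 : Fin m → ℂ) (A22 : Fin m → Fin m → ℂ) (A23 : Fin m → ℂ) (A24 : Fin m → Fin n → ℂ)
    (A31 : ℂ) (A32 : Fin m → ℂ) (A33 : ℂ) (A34 : Fin n → ℂ)
    (A41 : Fin n → ℂ) (A42 : Fin n → Fin m → ℂ) (A43 : Fin n → ℂ) (A44 : Fin n → Fin n → ℂ) (u : Unit) (k : Fin n) :
    blk A11 A12 A13 A14 A21 A22 A23 A24 A31 A32 A33 A34 A41 A42 A43 A44 (.inr (.inl u)) (.inr (.inr k)) = A34 k := rfl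

@[simp] lemma blk_apply_41 {m n : ℕ}
    (A11 : ℂ) (A12 : Fin m → ℂ) (A13 : ℂ) (A14 : Fin n → ℂ)
    (A21 : Fin m → ℂ) (A22 : Fin m → Fin m → ℂ) (A23 : Fin m → ℂ) (A24 : Fin m → Fin n → ℂ)
    (A31 : ℂ) (A32 : Fin m → ℂ) (A33 : ℂ) (A34 : Fin n → ℂ)
    (A41 : Fin n → ℂ) (A42 : Fin n → Fin m → ℂ) (A43 : Fin n → ℂ) (A44 : Fin n → Fin n → ℂ) (i : Fin n) (v : Unit) :
    blk A11 A12 A13 A14 A21 A22 A23 A24 A31 A32 A33 A34 A41 A42 A43 A44 (.inr (.inr i)) (.inl (.inl v)) = A41 i := rfl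

@[simp] lemma blk_apply_42 {m n : ℕ}
    (A11 : ℂ) (A12 : Fin m → ℂ) (A13 : ℂ) (A14 : Fin n → ℂ)
    (A21 : Fin m → ℂ) (A22 : Fin m → Fin m → ℂ) (A23 : Fin m → ℂ) (A24 : Fin m → Fin n → ℂ)
    (A31 : ℂ) (A32 : Fin m → ℂ) (A33 : ℂ) (A34 : Fin n → ℂ)
    (A41 : Fin n → ℂ) (A42 : Fin n → Fin m → ℂ) (A43 : Fin n → ℂ) (A44 : Fin n → Fin n → ℂ) (i : Fin n) (k : Fin m) :
    blk A11 A12 A13 A14 A21 A22 A23 A24 A31 A32 A33 A34 A41 A42 A43 A44 (.inr (.inr i)) (.inl (.inr k)) = A42 i k := rfl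

@[simp] lemma blk_apply_43 {m n : ℕ}
    (A11 : ℂ) (A12 : Fin m → ℂ) (A13 : ℂ) (A14 : Fin n → ℂ)
    (A21 : Fin m → ℂ) (A22 : Fin m → Fin m → ℂ) (A23 : Fin m → ℂ) (A24 : Fin m → Fin n → ℂ)
    (A31 : ℂ) (A32 : Fin m → ℂ) (A33 : ℂ) (A34 : Fin n → ℂ)
    (A41 : Fin n → ℂ) (A42 : Fin n → Fin m → ℂ) (A43 : Fin n → ℂ) (A44 : Fin n → Fin n → ℂ) (i : Fin n) (v : Unit) :
    blk A11 A12 A13 A14 A21 A22 A23 A24 A31 A32 A33 A34 A41 A42 A43 A44 (.inr (.inr i)) (.inr (.inl v)) = A43 i := rfl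

@[simp] lemma blk_apply_44 {m n : ℕ}
    (A11 : ℂ) (A12 : Fin m → ℂ) (A13 : ℂ) (A14 : Fin n → ℂ)
    (A21 : Fin m → ℂ) (A22 : Fin m → Fin m → ℂ) (A23 : Fin m → ℂ) (A24 : Fin m → Fin n → ℂ)
    (A31 : ℂ) (A32 : Fin m → ℂ) (A33 : ℂ) (A34 : Fin n → ℂ)
    (A41 : Fin n → ℂ) (A42 : Fin n → Fin m → ℂ) (A43 : Fin n → ℂ) (A44 : Fin n → Fin n → ℂ) (i : Fin n) (k : Fin n) :
    blk A11 A12 A13 A14 A21 A22 A23 A24 A31 A32 A33 A34 A41 A42 A43 A44 (.inr (.inr i)) (.inr (.inr k)) = A44 i k := rfl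

lemma blk_mul {m n : ℕ}
    (A11 : ℂ) (A12 : Fin m → ℂ) (A13 : ℂ) (A14 : Fin n → ℂ)
    (A21 : Fin m → ℂ) (A22 : Fin m → Fin m → ℂ) (A23 : Fin m → ℂ) (A24 : Fin m → Fin n → ℂ)
    (A31 : ℂ) (A32 : Fin m → ℂ) (A33 : ℂ) (A34 : Fin n → ℂ)
    (A41 : Fin n → ℂ) (A42 : Fin n → Fin m → ℂ) (A43 : Fin n → ℂ) (A44 : Fin n → Fin n → ℂ)
    (B11 : ℂ) (B12 : Fin m → ℂ) (B13 : ℂ) (B14 : Fin n → ℂ)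
    (B21 : Fin m → ℂ) (B22 : Fin m → Fin m → ℂ) (B23 : Fin m → ℂ) (B24 : Fin m → Fin n → ℂ)
    (B31 : ℂ) (B32 : Fin m → ℂ) (B33 : ℂ) (B34 : Fin n → ℂ)
    (B41 : Fin n → ℂ) (B42 : Fin n → Fin m → ℂ) (B43 : Fin n → ℂ) (B44 : Fin n → Fin n → ℂ) :
    blk A11 A12 A13 A14 A21 A22 A23 A24 A31 A32 A33 A34 A41 A42 A43 A44 *
    blk B11 B12 B13 B14 B21 B22 B23 B24 B31 B32 B33 B34 B41 B42 B43 B44 =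
    blk
      (A11 * B11 + (∑ j, A12 j * B21 j) + A13 * B31 + (∑ j, A14 j * B41 j))
      (fun k => A11 * B12 k + (∑ j, A12 j * B22 j k) + A13 * B32 k + (∑ j, A14 j * B42 j k))
      (A11 * B13 + (∑ j, A12 j * B23 j) + A13 * B33 + (∑ j, A14 j * B43 j))
      (fun k => A11 * B14 k + (∑ j, A12 j * B24 j k) + A13 * B34 k + (∑ j, A14 j * B44 j k))
      (fun i => A21 i * B11 + (∑ j, A22 i j * B21 j) + A23 i * B31 + (∑ j, A24 i j * B41 j))
      (fun i k => A21 i * B12 k + (∑ j, A22 i j * B22 j k) + A23 i * B32 k + (∑ j, A24 i j * B42 j k))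
      (fun i => A21 i * B13 + (∑ j, A22 i j * B23 j) + A23 i * B33 + (∑ j, A24 i j * B43 j))
      (fun i k => A21 i * B14 k + (∑ j, A22 i j * B24 j k) + A23 i * B34 k + (∑ j, A24 i j * B44 j k))
      (A31 * B11 + (∑ j, A32 j * B21 j) + A33 * B31 + (∑ j, A34 j * B41 j))
      (fun k => A31 * B12 k + (∑ j, A32 j * B22 j k) + A33 * B32 k + (∑ j, A34 j * B42 j k))
      (A31 * B13 + (∑ j, A32 j * B23 j) + A33 * B33 + (∑ j, A34 j * B43 j))
      (fun k => A31 * B14 k + (∑ j, A32 j * B24 j k) + A33 * B34 k + (∑ j, A34 j * B44 j k))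
      (fun i => A41 i * B11 + (∑ j, A42 i j * B21 j) + A43 i * B31 + (∑ j, A44 i j * B41 j))
      (fun i k => A41 i * B12 k + (∑ j, A42 i j * B22 j k) + A43 i * B32 k + (∑ j, A44 i j * B42 j k))
      (fun i => A41 i * B13 + (∑ j, A42 i j * B23 j) + A43 i * B33 + (∑ j, A44 i j * B43 j))
      (fun i k => A41 i * B14 k + (∑ j, A42 i j * B24 j k) + A43 i * B34 k + (∑ j, A44 i j * B44 j k)) := by
  ext i j
  rcases i with (i|i)|(i|i) <;> rcases j with (j|j)|(j|j) <;>
    simp [Matrix.mul_apply, Fintype.sum_sum_type] <;> ring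

lemma sum_fac1 {k : ℕ} (c d : ℂ) (f g : Fin k → ℂ) :
    ∑ j, c * f j * (d * g j) = c * d * ∑ j, f j * g j := by
  rw [Finset.mul_sum]; exact Finset.sum_congr rfl fun j _ => by ring

lemma sum_fac2 {k : ℕ} (c d e : ℂ) (f g : Fin k → ℂ) :
    ∑ j, c * f j * (d * g j * e) = c * d * e * ∑ j, f j * g j := by
  rw [Finset.mul_sum]; exact Finset.sum_congr rfl fun j _ => by ring

lemma sum_fac3 {k : ℕ} (c d : ℂ) (f g : Fin k → ℂ) :
    ∑ j, -(c * f j * (d * g j)) = -(c * d * ∑ j, f j * g j) := by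
  rw [Finset.mul_sum, ← Finset.sum_neg_distrib]
  exact Finset.sum_congr rfl fun j _ => by ring

lemma sum_fac4 {k : ℕ} (c d e : ℂ) (f g : Fin k → ℂ) :
    ∑ j, -(c * f j * (d * g j * e)) = -(c * d * e * ∑ j, f j * g j) := by
  rw [Finset.mul_sum, ← Finset.sum_neg_distrib]
  exact Finset.sum_congr rfl fun j _ => by ring

lemma sum_fac5 {k : ℕ} (c d : ℂ) (f g : Fin k → ℂ) :
    ∑ j, c * f j * d * g j = c * d * ∑ j, f j * g j := by
  rw [Finset.mul_sum]; exact Finset.sum_congr rfl fun j _ => by ring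

lemma sum_fac6 {k : ℕ} (c d : ℂ) (f g : Fin k → ℂ) :
    ∑ j, -(c * f j * d * g j) = -(c * d * ∑ j, f j * g j) := by
  rw [Finset.mul_sum, ← Finset.sum_neg_distrib]
  exact Finset.sum_congr rfl fun j _ => by ring

lemma sum_fac7 {k : ℕ} (c d : ℂ) (f g : Fin k → ℂ) :
    ∑ j, c * (d * f j) * g j = c * d * ∑ j, f j * g j := by
  rw [Finset.mul_sum]; exact Finset.sum_congr rfl fun j _ => by ring

lemma sum_gram {k : ℕ} (f : Fin k → ℂ) : ∑ j, star (f j) * f j = gram f := rfl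

end

theorem dsM_GDC_caseI {m n : ℕ} (a b : ℂ) (ha : a ≠ 0) (hb : b ≠ 0)
    (x y : Fin m → ℂ) (z w : Fin n → ℂ)
    (hxy : dotT x y = 0) (hzw : dotT z w = 0)
    (hs : gram x ≠ 0) (hu : gram y ≠ 0) (ht : gram z ≠ 0) (hv : gram w ≠ 0)
    (hr : a * star a + gram w ≠ 0) (hh : b * star b + gram y ≠ 0) :
    letI M := dsM a b x y z w
    letI r := a * star a + gram w
    letI h := b * star b + gram y
    letI Md := blk 0 (fun i => (gram y)⁻¹ * star (y i)) 0 (fun _ => 0)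
        (fun i => (gram x)⁻¹ * star (x i)) (fun _ _ => 0) (fun _ => 0)
          (fun i j => -((gram x)⁻¹ * a * (gram w)⁻¹) * star (x i) * star (w j))
        0 (fun _ => 0) 0 (fun j => (gram w)⁻¹ * star (w j))
        (fun _ => 0) (fun i j => -((gram z)⁻¹ * b * (gram y)⁻¹) * star (z i) * star (y j))
          (fun i => (gram z)⁻¹ * star (z i)) (fun _ _ => 0)
    letI Xc := blk 0 (fun j => h⁻¹ * star (y j)) (star b * h⁻¹) (fun _ => 0)
        (fun i => star a * (b * r)⁻¹ * y i) (fun _ _ => 0) (fun _ => 0)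
          (fun i j => (b * r)⁻¹ * y i * star (w j))
        (star a * r⁻¹) (fun _ => 0) 0 (fun j => r⁻¹ * star (w j))
        (fun _ => 0) (fun i j => (a * h)⁻¹ * w i * star (y j))
          (fun i => star b * (a * h)⁻¹ * w i) (fun _ _ => 0)
    Md * Xc * M =
      blk 0 (fun j => star a * (b * r)⁻¹ * x j) b⁻¹ (fun _ => 0)
        (fun _ => 0) (fun _ _ => 0) (fun _ => 0) (fun _ _ => 0)
        a⁻¹ (fun _ => 0) 0 (fun j => star b * (a * h)⁻¹ * z j)
        (fun _ => 0) (fun _ _ => 0) (fun _ => 0) (fun _ _ => 0) := by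
  show _ * _ * _ = _
  rw [dsM, blk_mul, blk_mul]
  have ey : (gram y)⁻¹ * gram y = 1 := inv_mul_cancel₀ hu
  have ew : (gram w)⁻¹ * gram w = 1 := inv_mul_cancel₀ hv
  have eb : b⁻¹ * b = 1 := inv_mul_cancel₀ hb
  have ea : a⁻¹ * a = 1 := inv_mul_cancel₀ ha
  have eR : (b * (a * star a + gram w))⁻¹ * (b * (a * star a + gram w)) = 1 :=
    inv_mul_cancel₀ (mul_ne_zero hb hr)
  have eH : (a * (b * star b + gram y))⁻¹ * (a * (b * star b + gram y)) = 1 :=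
    inv_mul_cancel₀ (mul_ne_zero ha hh)
  have eR0 : (a * star a + gram w)⁻¹ * (a * star a + gram w) = 1 := inv_mul_cancel₀ hr
  have eH0 : (b * star b + gram y)⁻¹ * (b * star b + gram y) = 1 := inv_mul_cancel₀ hh
  ext i j
  rcases i with (i|i)|(i|i) <;> rcases j with (j|j)|(j|j) <;>
    simp only [blk_apply_11, blk_apply_12, blk_apply_13, blk_apply_14,
      blk_apply_21, blk_apply_22, blk_apply_23, blk_apply_24,
      blk_apply_31, blk_apply_32, blk_apply_33, blk_apply_34,
      blk_apply_41, blk_apply_42, blk_apply_43, blk_apply_44,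
      mul_zero, zero_mul, add_zero, zero_add, Finset.sum_const_zero,
      sum_fac1, sum_fac2, sum_fac3, sum_fac4, sum_fac5, sum_fac6, sum_fac7, sum_gram,
      add_mul, neg_mul, mul_neg, Finset.sum_add_distrib, Finset.sum_neg_distrib] <;>
    try rfl
  case inl.inl.inl.inr =>
    linear_combination (star a * (b * (a * star a + gram w))⁻¹ * x j) * ey
  case inl.inl.inr.inl =>
    linear_combination (star a * (b * (a * star a + gram w))⁻¹ * a +
        (b * (a * star a + gram w))⁻¹ * gram w) * ey +
      b⁻¹ * eR - ((b * (a * star a + gram w))⁻¹ * (a * star a + gram w)) * eb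
  case inl.inr.inl.inl =>
    linear_combination ((gram x)⁻¹ * star (x i)) * eH0 - ((gram x)⁻¹ * star (x i)) * ew -
      ((gram x)⁻¹ * star (x i) * (gram w)⁻¹ * gram w) * eH
  case inl.inr.inr.inr =>
    linear_combination
      -((gram x)⁻¹ * star (x i) * star b * z j * (b * star b + gram y)⁻¹) * eH +
      ((gram x)⁻¹ * star (x i) * star b * z j * a * (a * (b * star b + gram y))⁻¹) * eH0 -
      ((gram x)⁻¹ * star (x i) * star b * z j * a * (a * (b * star b + gram y))⁻¹) * ew
  case inr.inl.inl.inl =>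
    linear_combination ((a * (b * star b + gram y))⁻¹ * (b * star b + gram y)) * ew +
      a⁻¹ * eH - ((a * (b * star b + gram y))⁻¹ * (b * star b + gram y)) * ea
  case inr.inl.inr.inr =>
    linear_combination (star b * (a * (b * star b + gram y))⁻¹ * z j) * ew
  case inr.inr.inl.inr =>
    linear_combination
      ((gram z)⁻¹ * star (z i) * star a * x j) *
        (-(b * (b * (a * star a + gram w))⁻¹) * ey -
          (a * star a + gram w)⁻¹ * eR + b * (b * (a * star a + gram w))⁻¹ * eR0)
  case inr.inr.inr.inl =>
    linear_combination ((gram z)⁻¹ * star (z i)) * eR0 - ((gram z)⁻¹ * star (z i)) * eR -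
      ((gram z)⁻¹ * star (z i) * (a * star a + gram w) * b * (b * (a * star a + gram w))⁻¹) * ey
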